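/- Let n ≥ 1 and let g be a continuous function with compact support contained in (0,∞)×ℝⁿ. Then for every x ∈ ℝⁿ, α^{-n/2} A^{(α)}g(x) converges, as α → 0⁺, to ωₙ^{1/2} Vg(x), where ωₙ is the Lebesgue measure of the unit ball of ℝⁿ. -/

import Mathlib

open MeasureTheory Metric Set Filter ENNReal

noncomputable section

/-- `ℝⁿ` as a Euclidean space. -/
abbrev En (n : ℕ) : Type := EuclideanSpace ℝ (Fin n)

/-- `g` is (measurable and) locally square integrable on `(0,∞) × ℝⁿ`. -/
def LocSqInt (n : ℕ) (g : ℝ → En n → ℝ) : Prop :=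
  Measurable (Function.uncurry g) ∧
  LocallyIntegrableOn (fun q : ℝ × En n => (g q.1 q.2) ^ 2)
    (Set.Ioi (0 : ℝ) ×ˢ (Set.univ : Set (En n)))

/-- The conical square function `A^{(α)} g (x)` of aperture `α`, with values in `[0,∞]`. -/
def conicalSq (n : ℕ) (α : ℝ) (g : ℝ → En n → ℝ) (x : En n) : ℝ≥0∞ :=
  (∫⁻ t in Set.Ioi (0 : ℝ), ∫⁻ y,
      (ball x (α * t)).indicator (fun y => ENNReal.ofReal (|g t y| ^ 2 / t ^ (n + 1))) y) ^
    (1 / 2 : ℝ)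

/-- The tent space quasi-norm `‖g‖_{T^{p,2}_α} = ‖A^{(α)} g‖_{L^p(ℝⁿ)}`, with values in `[0,∞]`. -/
def tentNorm (n : ℕ) (p α : ℝ) (g : ℝ → En n → ℝ) : ℝ≥0∞ :=
  (∫⁻ x, conicalSq n α g x ^ p) ^ (1 / p)

/-- The vertical square function `V g (x)`. -/
def vertSq (n : ℕ) (g : ℝ → En n → ℝ) (x : En n) : ℝ≥0∞ :=
  (∫⁻ t in Set.Ioi (0 : ℝ), ENNReal.ofReal (|g t x| ^ 2 / t)) ^ (1 / 2 : ℝ)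

/-- `‖V g‖_{L^p(ℝⁿ)}`, with values in `[0,∞]`. -/
def vertNorm (n : ℕ) (p : ℝ) (g : ℝ → En n → ℝ) : ℝ≥0∞ :=
  (∫⁻ x, vertSq n g x ^ p) ^ (1 / p)

/-- The tent `T_α B` of aperture `α` above the ball `B = B(x,r)`. -/
def tent (n : ℕ) (α : ℝ) (x : En n) (r : ℝ) : Set (ℝ × En n) :=
  {q | 0 < q.1 ∧ q.1 < r / α ∧ q.2 ∈ ball x (r - α * q.1)}

/-- `∫_{T_α B} |g(t,y)|² dy dt / t`. -/
def tentIntegral (n : ℕ) (α : ℝ) (g : ℝ → En n → ℝ) (x : En n) (r : ℝ) : ℝ≥0∞ :=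
  ∫⁻ q in tent n α x r, ENNReal.ofReal (|g q.1 q.2| ^ 2 / q.1)

/-- A `T^{p,2}_α`-atom associated with the ball `B(x,r)`: it is supported in the tent
`T_α B(x,r)` and satisfies `∫_{T_α B} |a|² dy dt/t ≤ α^{-n} |B|^{-(2/p - 1)}`. -/
def IsTentAtom (n : ℕ) (p α : ℝ) (a : ℝ → En n → ℝ) (x : En n) (r : ℝ) : Prop :=
  (∀ t y, (t, y) ∉ tent n α x r → a t y = 0) ∧
  tentIntegral n α a x r ≤
    ENNReal.ofReal (α ^ (-(n : ℝ))) * volume (ball x r) ^ (-(2 / p - 1))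

/-- The grand square function `G_λ g (x)` with exponent `nλ`. -/
def grandSq (n : ℕ) (l : ℝ) (g : ℝ → En n → ℝ) (x : En n) : ℝ≥0∞ :=
  (∫⁻ t in Set.Ioi (0 : ℝ), ∫⁻ y,
      ENNReal.ofReal ((t / (dist x y + t)) ^ ((n : ℝ) * l) * |g t y| ^ 2 / t ^ (n + 1))) ^
    (1 / 2 : ℝ)

open scoped Topology

lemma En.nontrivial (n : ℕ) (hn : 1 ≤ n) : Nontrivial (En n) := by
  apply Module.nontrivial_of_finrank_pos (R := ℝ)
  rw [finrank_euclideanSpace_fin]; omega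

lemma vol_ball_En (n : ℕ) (hn : 1 ≤ n) (x : En n) {r : ℝ} (hr : 0 ≤ r) :
    volume (ball x r) = ENNReal.ofReal (r ^ n) * volume (ball (0 : En n) 1) := by
  haveI := En.nontrivial n hn
  rw [Measure.addHaar_ball volume x hr, finrank_euclideanSpace_fin]

lemma key_real (n : ℕ) (hn : 1 ≤ n) (h : En n → ℝ) (hh : Continuous h)
    (x : En n) {t : ℝ} (ht : 0 < t) :
    Tendsto (fun α : ℝ => α⁻¹ ^ n * ∫ y in ball x (α * t), h y) (𝓝[>] (0:ℝ))
      (𝓝 (t ^ n * (volume (ball (0:En n) 1)).toReal * h x)) := by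
  set ωR := (volume (ball (0:En n) 1)).toReal with hωR
  have hω_pos : 0 < ωR :=
    ENNReal.toReal_pos (measure_ball_pos volume 0 one_pos).ne' measure_ball_lt_top.ne
  rw [Metric.tendsto_nhds]
  intro ε εpos
  set C := t ^ n * ωR with hC
  have hCpos : 0 < C := mul_pos (pow_pos ht n) hω_pos
  set ε' := ε / (C + 1) with hε'def
  have hε' : 0 < ε' := div_pos εpos (by linarith)
  obtain ⟨δ, δpos, hδ⟩ := Metric.continuousAt_iff.1 (hh.continuousAt (x := x)) ε' hε'
  have hmem : Ioo (0:ℝ) (δ / t) ∈ 𝓝[>] (0:ℝ) :=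
    Ioo_mem_nhdsGT_of_mem ⟨le_refl _, div_pos δpos ht⟩
  filter_upwards [hmem] with α hα
  obtain ⟨hα0, hαδ⟩ := hα
  have hr0 : 0 < α * t := mul_pos hα0 ht
  have hrδ : α * t < δ := (lt_div_iff₀ ht).1 hαδ
  have hvol : (volume (ball x (α*t))).toReal = (α*t)^n * ωR := by
    rw [vol_ball_En n hn x hr0.le, ENNReal.toReal_mul, ENNReal.toReal_ofReal (by positivity)]
  have hint : IntegrableOn h (ball x (α*t)) :=
    (hh.continuousOn.integrableOn_compact (isCompact_closedBall x (α*t))).mono_set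
      ball_subset_closedBall
  have hint' : IntegrableOn (fun _ => h x) (ball x (α*t)) :=
    integrableOn_const measure_ball_lt_top.ne enorm_ne_top
  have hpow : α⁻¹^n * (α*t)^n = t^n := by
    rw [← mul_pow, inv_mul_cancel_left₀ hα0.ne']
  have hkey : α⁻¹^n * (∫ y in ball x (α*t), h y) - C * h x
      = α⁻¹^n * ∫ y in ball x (α*t), (h y - h x) := by
    rw [integral_sub hint hint', setIntegral_const, measureReal_def, hvol, smul_eq_mul, mul_sub, hC,
      show α⁻¹^n * ((α*t)^n * ωR * h x) = (α⁻¹^n * (α*t)^n) * ωR * h x by ring, hpow]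
  have hbound : ‖∫ y in ball x (α*t), (h y - h x)‖ ≤ ε' * ((α*t)^n * ωR) := by
    rw [← hvol]
    apply norm_setIntegral_le_of_norm_le_const measure_ball_lt_top
    · intro y hy
      have hdy : dist y x < δ := lt_trans (mem_ball.1 hy) hrδ
      have := hδ hdy
      rw [Real.dist_eq] at this
      simpa [Real.norm_eq_abs] using this.le
  have hfinal : dist (α⁻¹^n * ∫ y in ball x (α*t), h y) (C * h x) ≤ ε' * C := by
    rw [Real.dist_eq, hkey, abs_mul, abs_of_nonneg (by positivity : (0:ℝ) ≤ α⁻¹^n)]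
    calc α⁻¹^n * |∫ y in ball x (α*t), (h y - h x)|
        ≤ α⁻¹^n * (ε' * ((α*t)^n * ωR)) := by
          apply mul_le_mul_of_nonneg_left _ (by positivity)
          simpa [Real.norm_eq_abs] using hbound
      _ = ε' * ((α⁻¹^n * (α*t)^n) * ωR) := by ring
      _ = ε' * C := by rw [hpow]
  have : ε' * C < ε := by
    rw [hε'def, div_mul_eq_mul_div, div_lt_iff₀ (by linarith)]
    nlinarith
  exact lt_of_le_of_lt hfinal this

lemma key_ennreal (n : ℕ) (hn : 1 ≤ n) (h : En n → ℝ) (hh : Continuous h)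
    (h0 : ∀ y, 0 ≤ h y) (x : En n) {t : ℝ} (ht : 0 < t) :
    Tendsto (fun α : ℝ =>
        ENNReal.ofReal (α ^ (-(n:ℝ))) * ∫⁻ y in ball x (α * t), ENNReal.ofReal (h y))
      (𝓝[>] (0:ℝ)) (𝓝 (volume (ball (0:En n) 1) * ENNReal.ofReal (t ^ n * h x))) := by
  have H := ENNReal.tendsto_ofReal (key_real n hn h hh x ht)
  have htarget : ENNReal.ofReal (t^n * (volume (ball (0:En n) 1)).toReal * h x)
      = volume (ball (0:En n) 1) * ENNReal.ofReal (t^n * h x) := by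
    rw [show t^n * (volume (ball (0:En n) 1)).toReal * h x
        = (volume (ball (0:En n) 1)).toReal * (t^n * h x) by ring,
      ENNReal.ofReal_mul ENNReal.toReal_nonneg,
      ENNReal.ofReal_toReal measure_ball_lt_top.ne]
  rw [htarget] at H
  refine H.congr' ?_
  filter_upwards [self_mem_nhdsWithin] with α hα
  have hα0 : (0:ℝ) < α := hα
  have hint : IntegrableOn h (ball x (α*t)) :=
    (hh.continuousOn.integrableOn_compact (isCompact_closedBall x (α*t))).mono_set
      ball_subset_closedBall
  rw [ENNReal.ofReal_mul (by positivity),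
    ofReal_integral_eq_lintegral_ofReal hint (Eventually.of_forall h0)]
  congr 2
  rw [Real.rpow_neg hα0.le, Real.rpow_natCast, ← inv_pow]


/-- For `g` continuous with compact support contained in `(0,∞) × ℝⁿ`,
`α^{-n/2} A^{(α)} g(x) → ωₙ^{1/2} V g(x)` as `α → 0⁺`, for every `x ∈ ℝⁿ`,
where `ωₙ` is the volume of the unit ball of `ℝⁿ`. -/
theorem statement17 (n : ℕ) (hn : 1 ≤ n) (g : ℝ → En n → ℝ)
    (hc : Continuous (Function.uncurry g)) (hs : HasCompactSupport (Function.uncurry g))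
    (hsub : tsupport (Function.uncurry g) ⊆ Set.Ioi (0 : ℝ) ×ˢ (Set.univ : Set (En n)))
    (x : En n) :
    Filter.Tendsto (fun α : ℝ => ENNReal.ofReal (α ^ (-(n : ℝ) / 2)) * conicalSq n α g x)
      (nhdsWithin 0 (Set.Ioi 0))
      (nhds (volume (ball (0 : En n) 1) ^ (1 / 2 : ℝ) * vertSq n g x)) := by
  simp only [conicalSq, vertSq]
  classical
  have hωtop : volume (ball (0 : En n) 1) ≠ ⊤ := measure_ball_lt_top.ne
  obtain ⟨M, hM⟩ := hs.exists_bound_of_continuous hc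
  have hM0 : 0 ≤ M := le_trans (norm_nonneg _) (hM (1, x))
  set K := tsupport (Function.uncurry g) with hK
  set S := Prod.fst '' K ∪ {1} with hSdef
  have hScomp : IsCompact S := (hs.image continuous_fst).union isCompact_singleton
  have hSne : S.Nonempty := ⟨1, Set.mem_union_right _ (Set.mem_singleton (1:ℝ))⟩
  have hSsub : S ⊆ Ioi (0:ℝ) := by
    rintro s (⟨p, hp, rfl⟩ | hs1)
    · exact (hsub hp).1
    · rw [Set.mem_singleton_iff] at hs1
      rw [hs1]
      exact Set.mem_Ioi.mpr one_pos
  set ε := sInf S with hεdef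
  set R := sSup S with hRdef
  have hε : 0 < ε := hSsub (hScomp.sInf_mem hSne)
  have hgt : ∀ t, t ∉ Icc ε R → ∀ y, g t y = 0 := by
    intro t ht y
    by_contra hgy
    have hmem : (t, y) ∈ K := subset_tsupport _ hgy
    exact ht ⟨csInf_le hScomp.bddBelow (Or.inl ⟨(t,y), hmem, rfl⟩),
      le_csSup hScomp.bddAbove (Or.inl ⟨(t,y), hmem, rfl⟩)⟩
  -- main squared convergence, via dominated convergence
  have main : Tendsto (fun α : ℝ => ∫⁻ t in Ioi (0:ℝ),
      ENNReal.ofReal (α ^ (-(n:ℝ))) * ∫⁻ y,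
        (ball x (α * t)).indicator (fun y => ENNReal.ofReal (|g t y| ^ 2 / t ^ (n + 1))) y)
      (𝓝[>] (0:ℝ))
      (𝓝 (∫⁻ t in Ioi (0:ℝ), volume (ball (0 : En n) 1) * ENNReal.ofReal (|g t x| ^ 2 / t))) := by
    refine tendsto_lintegral_filter_of_dominated_convergence
      ((Icc ε R).indicator fun _ => ENNReal.ofReal (M^2/ε) * volume (ball (0 : En n) 1))
      ?_ ?_ ?_ ?_
    · -- measurability
      refine Eventually.of_forall fun α => Measurable.const_mul ?_ _
      have hm : Measurable fun p : ℝ × En n =>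
          ({q : ℝ × En n | dist q.2 x < α * q.1}).indicator
            (fun q => ENNReal.ofReal (|g q.1 q.2| ^ 2 / q.1 ^ (n + 1))) p := by
        apply Measurable.indicator
        · exact ENNReal.measurable_ofReal.comp
            (((hc.abs.pow 2).measurable).div ((continuous_fst.pow (n+1)).measurable))
        · exact measurableSet_lt ((continuous_snd.dist continuous_const).measurable)
            ((continuous_const.mul continuous_fst).measurable)
      have heq : (fun t : ℝ => ∫⁻ y, (ball x (α * t)).indicator
          (fun y => ENNReal.ofReal (|g t y| ^ 2 / t ^ (n + 1))) y)
          = fun t : ℝ => ∫⁻ y, ({q : ℝ × En n | dist q.2 x < α * q.1}).indicator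
            (fun q => ENNReal.ofReal (|g q.1 q.2| ^ 2 / q.1 ^ (n + 1))) (t, y) := by
        funext t
        refine lintegral_congr fun y => ?_
        simp [Set.indicator_apply, mem_ball]
      rw [heq]
      exact hm.lintegral_prod_right'
    · -- domination
      filter_upwards [self_mem_nhdsWithin] with α (hα : (0:ℝ) < α)
      rw [ae_restrict_iff' measurableSet_Ioi]
      refine Eventually.of_forall fun t ht => ?_
      have ht0 : (0:ℝ) < t := ht
      by_cases htIcc : t ∈ Icc ε R
      · rw [Set.indicator_of_mem htIcc, lintegral_indicator measurableSet_ball]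
        have hb1 : ∫⁻ y in ball x (α*t), ENNReal.ofReal (|g t y| ^ 2 / t ^ (n + 1))
            ≤ ENNReal.ofReal (M^2 / t^(n+1)) * volume (ball x (α*t)) := by
          rw [← setLIntegral_const]
          refine lintegral_mono fun y => ?_
          apply ENNReal.ofReal_le_ofReal
          have habs : |g t y| ≤ M := by simpa [Real.norm_eq_abs] using hM (t, y)
          gcongr
        calc ENNReal.ofReal (α ^ (-(n:ℝ))) *
              ∫⁻ y in ball x (α*t), ENNReal.ofReal (|g t y| ^ 2 / t ^ (n + 1))
            ≤ ENNReal.ofReal (α ^ (-(n:ℝ))) *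
              (ENNReal.ofReal (M^2 / t^(n+1)) * volume (ball x (α*t))) :=
              mul_le_mul_right hb1 _
          _ = ENNReal.ofReal (α⁻¹ ^ n * (M ^ 2 / t ^ (n + 1)) * (α * t) ^ n) *
              volume (ball (0:En n) 1) := by
              rw [vol_ball_En n hn x (by positivity), Real.rpow_neg hα.le, Real.rpow_natCast,
                ← inv_pow, ← mul_assoc, ← mul_assoc,
                ← ENNReal.ofReal_mul (by positivity), ← ENNReal.ofReal_mul (by positivity)]
          _ = ENNReal.ofReal (M^2 / t) * volume (ball (0:En n) 1) := by
              congr 1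
              congr 1
              rw [mul_pow, pow_succ, inv_pow]
              field_simp
              ring
          _ ≤ ENNReal.ofReal (M^2 / ε) * volume (ball (0:En n) 1) := by
              gcongr
              exact htIcc.1
      · rw [Set.indicator_of_notMem htIcc]
        have h0g : ∀ y, g t y = 0 := hgt t htIcc
        simp [h0g]
    · -- finiteness of the bound
      refine ne_top_of_le_ne_top ?_ (setLIntegral_le_lintegral _ _)
      rw [lintegral_indicator_const measurableSet_Icc]
      exact ENNReal.mul_ne_top (ENNReal.mul_ne_top ENNReal.ofReal_ne_top hωtop)
        (by rw [Real.volume_Icc]; exact ENNReal.ofReal_ne_top)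
    · -- pointwise limit
      rw [ae_restrict_iff' measurableSet_Ioi]
      refine Eventually.of_forall fun t ht => ?_
      have ht0 : (0:ℝ) < t := ht
      have hcont : Continuous fun y => |g t y| ^ 2 / t ^ (n+1) :=
        ((hc.comp (Continuous.prodMk_right t)).abs.pow 2).div_const _
      have h0 : ∀ y, 0 ≤ |g t y| ^ 2 / t ^ (n+1) := fun y => by positivity
      have H := key_ennreal n hn (fun y => |g t y| ^ 2 / t ^ (n+1)) hcont h0 x ht0
      have hrw : t ^ n * (|g t x| ^ 2 / t ^ (n+1)) = |g t x| ^ 2 / t := by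
        rw [pow_succ]
        field_simp
        ring
      rw [hrw] at H
      simpa [lintegral_indicator measurableSet_ball] using H
  -- pass the constant inside / outside
  have main2 : Tendsto (fun α : ℝ =>
      ENNReal.ofReal (α ^ (-(n:ℝ))) * ∫⁻ t in Ioi (0:ℝ), ∫⁻ y,
        (ball x (α * t)).indicator (fun y => ENNReal.ofReal (|g t y| ^ 2 / t ^ (n + 1))) y)
      (𝓝[>] (0:ℝ))
      (𝓝 (volume (ball (0 : En n) 1) * ∫⁻ t in Ioi (0:ℝ), ENNReal.ofReal (|g t x| ^ 2 / t))) := by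
    simpa [lintegral_const_mul' _ _ ENNReal.ofReal_ne_top, lintegral_const_mul' _ _ hωtop]
      using main
  -- take square roots
  have h2 := main2.ennrpow_const (1/2 : ℝ)
  rw [ENNReal.mul_rpow_of_nonneg _ _ (by norm_num : (0:ℝ) ≤ 1/2)] at h2
  refine Tendsto.congr' ?_ h2
  filter_upwards [self_mem_nhdsWithin] with α (hα : (0:ℝ) < α)
  rw [ENNReal.mul_rpow_of_nonneg _ _ (by norm_num : (0:ℝ) ≤ 1/2)]
  congr 1
  rw [ENNReal.ofReal_rpow_of_pos (Real.rpow_pos_of_pos hα (-(n:ℝ))), ← Real.rpow_mul hα.le]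
  congr 1
  ring

end
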